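/- Let p,q∈(1,∞) with 1/p + 1/q = 1, let β∈(0,1], let s ≥ 1, γ₁ > −1 and γ₂ > 0. For any f∈L_p(0,∞) and any measurable g with ‖g‖_{L_q^{0,β}} = (∫₀^∞ |g(v)|^q K₀(βv) dv)^{1/q} < ∞, one has (∫₀^∞ |(f⋆g)(x)|^s x^{γ₁} e^{−γ₂ x} dx)^{1/s} ≤ 2^{1/q} · γ₂^{−(γ₁+1)/s} · Γ(γ₁+1)^{1/s} · ‖f‖_{L_p(0,∞)} · ‖g‖_{L_q^{0,β}}, where Γ is Euler's gamma function. -/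

import Mathlib

open MeasureTheory Real Set

/-- The kernel function φ(x,u,v). -/
noncomputable def phiKer (x u v : ℝ) : ℝ :=
  Real.exp (-v * Real.cosh (x + u - 1)) + Real.exp (-v * Real.cosh (x - u + 1))
    - Real.exp (-v * Real.cosh (x + u + 1)) - Real.exp (-v * Real.cosh (x - u - 1))

/-- The modified Bessel function of the second kind of order zero. -/
noncomputable def K0 (v : ℝ) : ℝ := ∫ t in Set.Ioi (0 : ℝ), Real.exp (-v * Real.cosh t)

/-- The trigonometric-weighted generalized convolution (f ⋆ g). -/
noncomputable def gconv (f g : ℝ → ℝ) (x : ℝ) : ℝ :=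
  (1 / 4) * ∫ v in Set.Ioi (0 : ℝ), ∫ u in Set.Ioi (0 : ℝ), phiKer x u v * f u * g v

/-- Fourier cosine transform. -/
noncomputable def Fc (f : ℝ → ℝ) (y : ℝ) : ℝ :=
  Real.sqrt (2 / Real.pi) * ∫ x in Set.Ioi (0 : ℝ), f x * Real.cos (x * y)

/-- Fourier sine transform. -/
noncomputable def Fs (f : ℝ → ℝ) (y : ℝ) : ℝ :=
  Real.sqrt (2 / Real.pi) * ∫ x in Set.Ioi (0 : ℝ), f x * Real.sin (x * y)

/-- Modified Bessel function K_{iy}(x). -/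
noncomputable def Kiy (y x : ℝ) : ℝ :=
  ∫ u in Set.Ioi (0 : ℝ), Real.exp (-x * Real.cosh u) * Real.cos (y * u)

/-- Kontorovich–Lebedev transform. -/
noncomputable def KL (g : ℝ → ℝ) (y : ℝ) : ℝ := ∫ x in Set.Ioi (0 : ℝ), Kiy y x * g x

/-- Fourier cosine convolution. -/
noncomputable def fcConv (f g : ℝ → ℝ) (x : ℝ) : ℝ :=
  (1 / Real.sqrt (2 * Real.pi)) * ∫ u in Set.Ioi (0 : ℝ), f u * (g |x - u| + g (x + u))

/-- Fourier sine–cosine generalized convolution. -/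
noncomputable def fscConv (f g : ℝ → ℝ) (x : ℝ) : ℝ :=
  (1 / Real.sqrt (2 * Real.pi)) * ∫ u in Set.Ioi (0 : ℝ), f u * (g |x - u| - g (x + u))



section GconvHelpers
open scoped ENNReal

-- basic facts
lemma self_le_cosh (t : ℝ) : t ≤ Real.cosh t := by
  rcases le_or_gt t 0 with h | h
  · linarith [Real.one_le_cosh t]
  · have := Real.sinh_lt_cosh (x := t)
    have h2 : t < Real.sinh t := (Real.self_lt_sinh_iff).2 h
    linarith

lemma integrableOn_exp_cosh {c : ℝ} (hc : 0 < c) :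
    IntegrableOn (fun t => Real.exp (-c * Real.cosh t)) (Set.Ioi (0:ℝ)) := by
  refine (exp_neg_integrableOn_Ioi 0 hc).mono' ?_ ?_
  · exact (Real.continuous_exp.comp (continuous_const.mul Real.continuous_cosh)).aestronglyMeasurable
  · filter_upwards [ae_restrict_mem measurableSet_Ioi] with t ht
    rw [Real.norm_eq_abs, abs_of_pos (Real.exp_pos _)]
    apply Real.exp_le_exp.2
    have := self_le_cosh t
    nlinarith

lemma K0_nonneg (c : ℝ) : 0 ≤ K0 c := by
  apply integral_nonneg; intro t; positivity

lemma lintegral_Ioi_exp_cosh {c : ℝ} (hc : 0 < c) :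
    ∫⁻ t in Set.Ioi (0:ℝ), ENNReal.ofReal (Real.exp (-c * Real.cosh t)) = ENNReal.ofReal (K0 c) := by
  rw [K0, ofReal_integral_eq_lintegral_ofReal (integrableOn_exp_cosh hc)]
  filter_upwards with t using (Real.exp_pos _).le

lemma lintegral_line_exp_cosh {c : ℝ} (hc : 0 < c) :
    ∫⁻ t : ℝ, ENNReal.ofReal (Real.exp (-c * Real.cosh t)) = 2 * ENNReal.ofReal (K0 c) := by
  have hmeas : Measurable fun t : ℝ => ENNReal.ofReal (Real.exp (-c * Real.cosh t)) := by
    fun_prop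
  rw [← lintegral_add_compl (μ := volume)
    (fun t : ℝ => ENNReal.ofReal (Real.exp (-c * Real.cosh t))) measurableSet_Ioi]
  have hcompl : (Set.Ioi (0:ℝ))ᶜ = Set.Iic 0 := by simp
  rw [hcompl]
  have hIic : ∫⁻ t in Set.Iic (0:ℝ), ENNReal.ofReal (Real.exp (-c * Real.cosh t))
      = ∫⁻ t in Set.Ioi (0:ℝ), ENNReal.ofReal (Real.exp (-c * Real.cosh t)) := by
    have hneg : MeasurePreserving (fun t : ℝ => -t) volume volume :=
      Measure.measurePreserving_neg _
    rw [← hneg.setLIntegral_comp_preimage measurableSet_Ioi hmeas]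
    have : (fun t : ℝ => -t) ⁻¹' Set.Ioi 0 = Set.Iio 0 := by
      ext t; simp
    rw [this]
    simp_rw [Real.cosh_neg]
    exact (setLIntegral_congr Iio_ae_eq_Iic).symm
  rw [hIic, lintegral_Ioi_exp_cosh hc, two_mul]

lemma lintegral_shift_le {c b : ℝ} (hc : 0 < c) :
    ∫⁻ u in Set.Ioi (0:ℝ), ENNReal.ofReal (Real.exp (-c * Real.cosh (u + b)))
      ≤ 2 * ENNReal.ofReal (K0 c) := by
  have hmeas : Measurable fun t : ℝ => ENNReal.ofReal (Real.exp (-c * Real.cosh t)) := by fun_prop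
  calc ∫⁻ u in Set.Ioi (0:ℝ), ENNReal.ofReal (Real.exp (-c * Real.cosh (u + b)))
      ≤ ∫⁻ u : ℝ, ENNReal.ofReal (Real.exp (-c * Real.cosh (u + b))) :=
        setLIntegral_le_lintegral _ _
    _ = ∫⁻ t : ℝ, ENNReal.ofReal (Real.exp (-c * Real.cosh t)) :=
        (measurePreserving_add_right volume b).lintegral_comp hmeas
    _ = 2 * ENNReal.ofReal (K0 c) := lintegral_line_exp_cosh hc

lemma lintegral_shift_le' {c b : ℝ} (hc : 0 < c) :
    ∫⁻ u in Set.Ioi (0:ℝ), ENNReal.ofReal (Real.exp (-c * Real.cosh (b - u)))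
      ≤ 2 * ENNReal.ofReal (K0 c) := by
  have hmeas : Measurable fun t : ℝ => ENNReal.ofReal (Real.exp (-c * Real.cosh t)) := by fun_prop
  calc ∫⁻ u in Set.Ioi (0:ℝ), ENNReal.ofReal (Real.exp (-c * Real.cosh (b - u)))
      ≤ ∫⁻ u : ℝ, ENNReal.ofReal (Real.exp (-c * Real.cosh (b - u))) :=
        setLIntegral_le_lintegral _ _
    _ = ∫⁻ t : ℝ, ENNReal.ofReal (Real.exp (-c * Real.cosh t)) :=
        (Measure.measurePreserving_sub_left volume b).lintegral_comp hmeas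
    _ = 2 * ENNReal.ofReal (K0 c) := lintegral_line_exp_cosh hc

lemma abs_phiKer_le (x u v : ℝ) (hv : 0 ≤ v) :
    |phiKer x u v| ≤ Real.exp (-v * Real.cosh (x + u - 1)) + Real.exp (-v * Real.cosh (x - u + 1))
      + Real.exp (-v * Real.cosh (x + u + 1)) + Real.exp (-v * Real.cosh (x - u - 1)) := by
  unfold phiKer
  have h1 := Real.exp_pos (-v * Real.cosh (x + u - 1))
  have h2 := Real.exp_pos (-v * Real.cosh (x - u + 1))
  have h3 := Real.exp_pos (-v * Real.cosh (x + u + 1))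
  have h4 := Real.exp_pos (-v * Real.cosh (x - u - 1))
  rw [abs_le]; constructor <;> nlinarith

lemma abs_phiKer_le_four_exp (x u v : ℝ) (hv : 0 ≤ v) :
    |phiKer x u v| ≤ 4 * Real.exp (-v) := by
  have key : ∀ t : ℝ, Real.exp (-v * Real.cosh t) ≤ Real.exp (-v) := by
    intro t
    apply Real.exp_le_exp.2
    have := Real.one_le_cosh t
    nlinarith
  have := abs_phiKer_le x u v hv
  linarith [key (x+u-1), key (x-u+1), key (x+u+1), key (x-u-1)]

lemma lintegral_v_phiKer_le (x u : ℝ) :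
    ∫⁻ v in Set.Ioi (0:ℝ), ENNReal.ofReal |phiKer x u v| ≤ 4 := by
  calc ∫⁻ v in Set.Ioi (0:ℝ), ENNReal.ofReal |phiKer x u v|
      ≤ ∫⁻ v in Set.Ioi (0:ℝ), ENNReal.ofReal (4 * Real.exp (-v)) := by
        apply lintegral_mono_ae
        filter_upwards [ae_restrict_mem measurableSet_Ioi] with v hv
        exact ENNReal.ofReal_le_ofReal (abs_phiKer_le_four_exp x u v (le_of_lt hv))
    _ = ENNReal.ofReal (∫ v in Set.Ioi (0:ℝ), 4 * Real.exp (-v)) := by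
        rw [ofReal_integral_eq_lintegral_ofReal]
        · have : IntegrableOn (fun v : ℝ => Real.exp (-v)) (Set.Ioi 0) := by
            simpa using exp_neg_integrableOn_Ioi 0 one_pos
          exact this.const_mul 4
        · filter_upwards with v; positivity
    _ = 4 := by
        rw [integral_const_mul, integral_exp_neg_Ioi_zero]; norm_num

lemma lintegral_u_phiKer_le (x v β : ℝ) (hv : 0 < v) (hβ : 0 < β) (hβ1 : β ≤ 1) :
    ∫⁻ u in Set.Ioi (0:ℝ), ENNReal.ofReal |phiKer x u v|
      ≤ 8 * ENNReal.ofReal (K0 (β * v)) := by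
  have hβv : 0 < β * v := mul_pos hβ hv
  have key : ∀ t : ℝ, Real.exp (-v * Real.cosh t) ≤ Real.exp (-(β*v) * Real.cosh t) := by
    intro t
    apply Real.exp_le_exp.2
    have h1 := Real.one_le_cosh t
    have h2 : 0 ≤ (v - β*v) * Real.cosh t :=
      mul_nonneg (by nlinarith) (by linarith)
    nlinarith
  have hptw : ∀ u : ℝ, ENNReal.ofReal |phiKer x u v| ≤
      ENNReal.ofReal (Real.exp (-(β*v) * Real.cosh (u + (x - 1))))
      + ENNReal.ofReal (Real.exp (-(β*v) * Real.cosh ((x + 1) - u)))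
      + ENNReal.ofReal (Real.exp (-(β*v) * Real.cosh (u + (x + 1))))
      + ENNReal.ofReal (Real.exp (-(β*v) * Real.cosh ((x - 1) - u))) := by
    intro u
    rw [← ENNReal.ofReal_add, ← ENNReal.ofReal_add, ← ENNReal.ofReal_add]
    · apply ENNReal.ofReal_le_ofReal
      have := abs_phiKer_le x u v hv.le
      have e1 : x + u - 1 = u + (x - 1) := by ring
      have e2 : x - u + 1 = (x + 1) - u := by ring
      have e3 : x + u + 1 = u + (x + 1) := by ring
      have e4 : x - u - 1 = (x - 1) - u := by ring
      rw [e1, e2, e3, e4] at this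
      linarith [key (u + (x-1)), key ((x+1) - u), key (u + (x+1)), key ((x-1) - u)]
    all_goals positivity
  calc ∫⁻ u in Set.Ioi (0:ℝ), ENNReal.ofReal |phiKer x u v|
      ≤ ∫⁻ u in Set.Ioi (0:ℝ),
        (ENNReal.ofReal (Real.exp (-(β*v) * Real.cosh (u + (x - 1))))
        + ENNReal.ofReal (Real.exp (-(β*v) * Real.cosh ((x + 1) - u)))
        + ENNReal.ofReal (Real.exp (-(β*v) * Real.cosh (u + (x + 1))))
        + ENNReal.ofReal (Real.exp (-(β*v) * Real.cosh ((x - 1) - u)))) :=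
        lintegral_mono hptw
    _ ≤ 8 * ENNReal.ofReal (K0 (β * v)) := by
        rw [lintegral_add_left (by fun_prop), lintegral_add_left (by fun_prop),
          lintegral_add_left (by fun_prop)]
        have h1 := lintegral_shift_le (b := x - 1) hβv
        have h2 := lintegral_shift_le' (b := x + 1) hβv
        have h3 := lintegral_shift_le (b := x + 1) hβv
        have h4 := lintegral_shift_le' (b := x - 1) hβv
        have : (8 : ℝ≥0∞) * ENNReal.ofReal (K0 (β * v))
            = 2 * ENNReal.ofReal (K0 (β * v)) + 2 * ENNReal.ofReal (K0 (β * v))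
            + 2 * ENNReal.ofReal (K0 (β * v)) + 2 * ENNReal.ofReal (K0 (β * v)) := by ring
        rw [this]
        gcongr <;> assumption

lemma gconv_pointwise (p q β : ℝ) (hp : 1 < p) (hq : 1 < q) (hpq : 1/p + 1/q = 1)
    (hβ : 0 < β) (hβ1 : β ≤ 1) (f g : ℝ → ℝ)
    (hf : MemLp f (ENNReal.ofReal p) (volume.restrict (Set.Ioi 0)))
    (hg : Measurable g)
    (hgK : IntegrableOn (fun v => |g v| ^ q * K0 (β * v)) (Set.Ioi 0)) (x : ℝ) :
    |gconv f g x| ≤ 2 ^ (1/q) * (∫ u in Set.Ioi (0:ℝ), |f u| ^ p) ^ (1/p) *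
      (∫ v in Set.Ioi (0:ℝ), |g v| ^ q * K0 (β * v)) ^ (1/q) := by
  have hp0 : 0 < p := lt_trans one_pos hp
  have hq0 : 0 < q := lt_trans one_pos hq
  set μ : Measure ℝ := volume.restrict (Set.Ioi 0) with hμdef
  set RF : ℝ := ∫ u in Set.Ioi (0:ℝ), |f u| ^ p with hRF
  set RG : ℝ := ∫ v in Set.Ioi (0:ℝ), |g v| ^ q * K0 (β * v) with hRG
  have hRFnn : 0 ≤ RF := integral_nonneg fun u => by positivity
  have hRGnn : 0 ≤ RG := by
    refine integral_nonneg fun v => ?_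
    have := K0_nonneg (β * v); positivity
  -- measurability helpers
  have hφm : Measurable fun z : ℝ × ℝ => phiKer x z.2 z.1 := by
    unfold phiKer; fun_prop
  have hfae : AEMeasurable f μ := hf.1.aemeasurable
  have hfsnd : AEMeasurable (fun z : ℝ × ℝ => f z.2) (μ.prod μ) :=
    hfae.comp_quasiMeasurePreserving Measure.quasiMeasurePreserving_snd
  set W : ℝ × ℝ → ℝ≥0∞ := fun z => ENNReal.ofReal |phiKer x z.2 z.1| with hWdef
  set F : ℝ × ℝ → ℝ≥0∞ := fun z => ENNReal.ofReal |f z.2| with hFdef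
  set G : ℝ × ℝ → ℝ≥0∞ := fun z => ENNReal.ofReal |g z.1| with hGdef
  have hWm : Measurable W := by fun_prop
  have hFae : AEMeasurable F (μ.prod μ) :=
    ENNReal.measurable_ofReal.comp_aemeasurable
      (continuous_abs.measurable.comp_aemeasurable hfsnd)
  have hGm : Measurable G := by fun_prop
  -- the iterated lintegral
  set A : ℝ≥0∞ := ∫⁻ v in Set.Ioi (0:ℝ), ∫⁻ u in Set.Ioi (0:ℝ),
      ENNReal.ofReal |phiKer x u v * f u * g v| with hAdef
  -- Step 1
  have step1 : ENNReal.ofReal |gconv f g x| ≤ ENNReal.ofReal (1/4) * A := by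
    rw [gconv, abs_mul, ENNReal.ofReal_mul (by positivity : (0:ℝ) ≤ |1/4|),
      show |(1/4 : ℝ)| = 1/4 by norm_num]
    gcongr
    calc ENNReal.ofReal |∫ v in Set.Ioi (0:ℝ), ∫ u in Set.Ioi (0:ℝ), phiKer x u v * f u * g v|
        = (‖∫ v in Set.Ioi (0:ℝ), ∫ u in Set.Ioi (0:ℝ), phiKer x u v * f u * g v‖₊ : ℝ≥0∞) :=
          (Real.enorm_eq_ofReal_abs _).symm
      _ ≤ ∫⁻ v in Set.Ioi (0:ℝ), (‖∫ u in Set.Ioi (0:ℝ), phiKer x u v * f u * g v‖₊ : ℝ≥0∞) :=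
          enorm_integral_le_lintegral_enorm _
      _ ≤ A := by
          apply lintegral_mono
          intro v
          refine le_trans (enorm_integral_le_lintegral_enorm _) ?_
          exact lintegral_mono fun u => le_of_eq (Real.enorm_eq_ofReal_abs _)
  -- Step 2: Tonelli
  have hΨae : AEMeasurable (fun z : ℝ × ℝ =>
      ENNReal.ofReal |phiKer x z.2 z.1 * f z.2 * g z.1|) (μ.prod μ) := by
    refine ENNReal.measurable_ofReal.comp_aemeasurable
      (continuous_abs.measurable.comp_aemeasurable ?_)
    exact (hφm.aemeasurable.mul hfsnd).mul (hg.comp measurable_fst).aemeasurable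
  have tonelli : A = ∫⁻ z, ENNReal.ofReal |phiKer x z.2 z.1 * f z.2 * g z.1| ∂(μ.prod μ) :=
    (lintegral_prod _ hΨae).symm
  -- Step 3: factor the integrand
  have hfactor : ∀ z : ℝ × ℝ, ENNReal.ofReal |phiKer x z.2 z.1 * f z.2 * g z.1|
      = W z * (F z * G z) := by
    intro z
    rw [abs_mul, abs_mul, ENNReal.ofReal_mul (by positivity),
      ENNReal.ofReal_mul (abs_nonneg _), mul_assoc]
  -- Step 4: Hölder via withDensity
  set ν : Measure (ℝ × ℝ) := (μ.prod μ).withDensity W with hνdef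
  have hFν : AEMeasurable F ν := hFae.mono_ac (withDensity_absolutelyContinuous _ _)
  have hGν : AEMeasurable G ν := hGm.aemeasurable
  have hconj : p.HolderConjugate q := Real.holderConjugate_iff.mpr ⟨hp, by rw [← one_div, ← one_div]; exact hpq⟩
  have holder := ENNReal.lintegral_mul_le_Lp_mul_Lq ν hconj hFν hGν
  simp only [Pi.mul_apply] at holder
  have hAν : A = ∫⁻ z, F z * G z ∂ν := by
    rw [tonelli, hνdef,
      lintegral_withDensity_eq_lintegral_mul₀ (g := fun z => F z * G z) hWm.aemeasurable
        (hFae.mul hGm.aemeasurable)]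
    refine lintegral_congr fun z => ?_
    simp only [Pi.mul_apply]
    exact hfactor z
  -- integrability of |f|^p
  have hfint : Integrable (fun u => |f u| ^ p) μ := by
    have h1 : ENNReal.ofReal p ≠ 0 := by
      simp [ENNReal.ofReal_eq_zero]; linarith
    have h2 : ENNReal.ofReal p ≠ ∞ := ENNReal.ofReal_ne_top
    have := hf.integrable_norm_rpow h1 h2
    simpa [Real.norm_eq_abs, ENNReal.toReal_ofReal hp0.le] using this
  -- F-side bound
  have hFside : ∫⁻ z, F z ^ p ∂ν ≤ 4 * ENNReal.ofReal RF := by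
    have hFpae : AEMeasurable (fun z => F z ^ p) (μ.prod μ) := hFae.pow_const p
    calc ∫⁻ z, F z ^ p ∂ν = ∫⁻ z, W z * F z ^ p ∂(μ.prod μ) := by
          rw [hνdef, lintegral_withDensity_eq_lintegral_mul₀ hWm.aemeasurable hFpae]
          exact lintegral_congr fun z => by simp [Pi.mul_apply]
      _ = ∫⁻ v in Set.Ioi (0:ℝ), ∫⁻ u in Set.Ioi (0:ℝ),
            ENNReal.ofReal |phiKer x u v| * ENNReal.ofReal (|f u|) ^ p := by
          exact lintegral_prod _ (hWm.aemeasurable.mul hFpae)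
      _ = ∫⁻ u in Set.Ioi (0:ℝ), ∫⁻ v in Set.Ioi (0:ℝ),
            ENNReal.ofReal |phiKer x u v| * ENNReal.ofReal (|f u|) ^ p := by
          exact lintegral_lintegral_swap (hWm.aemeasurable.mul hFpae)
      _ = ∫⁻ u in Set.Ioi (0:ℝ),
            (∫⁻ v in Set.Ioi (0:ℝ), ENNReal.ofReal |phiKer x u v|)
              * ENNReal.ofReal (|f u|) ^ p := by
          refine lintegral_congr fun u => ?_
          exact lintegral_mul_const' _ _ (ENNReal.rpow_ne_top_of_nonneg hp0.le
            ENNReal.ofReal_ne_top)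
      _ ≤ ∫⁻ u in Set.Ioi (0:ℝ), 4 * ENNReal.ofReal (|f u|) ^ p := by
          refine lintegral_mono fun u => ?_
          exact mul_le_mul_left (lintegral_v_phiKer_le x u) _
      _ = 4 * ∫⁻ u in Set.Ioi (0:ℝ), ENNReal.ofReal (|f u| ^ p) := by
          rw [← lintegral_const_mul' (4:ℝ≥0∞) _ (by norm_num)]
          exact lintegral_congr fun u => by
            rw [ENNReal.ofReal_rpow_of_nonneg (abs_nonneg _) hp0.le]
      _ = 4 * ENNReal.ofReal RF := by
          rw [← ofReal_integral_eq_lintegral_ofReal hfint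
            (Filter.Eventually.of_forall fun u => by positivity)]
  -- G-side bound
  have hgint : Integrable (fun v => |g v| ^ q * K0 (β * v)) μ := hgK
  have hGside : ∫⁻ z, G z ^ q ∂ν ≤ 8 * ENNReal.ofReal RG := by
    have hGqm : Measurable (fun z : ℝ × ℝ => G z ^ q) := hGm.pow_const q
    calc ∫⁻ z, G z ^ q ∂ν = ∫⁻ z, W z * G z ^ q ∂(μ.prod μ) := by
          rw [hνdef, lintegral_withDensity_eq_lintegral_mul₀ hWm.aemeasurable hGqm.aemeasurable]
          exact lintegral_congr fun z => by simp [Pi.mul_apply]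
      _ = ∫⁻ v in Set.Ioi (0:ℝ), ∫⁻ u in Set.Ioi (0:ℝ),
            ENNReal.ofReal |phiKer x u v| * ENNReal.ofReal (|g v|) ^ q := by
          exact lintegral_prod _ (hWm.aemeasurable.mul hGqm.aemeasurable)
      _ = ∫⁻ v in Set.Ioi (0:ℝ),
            (∫⁻ u in Set.Ioi (0:ℝ), ENNReal.ofReal |phiKer x u v|)
              * ENNReal.ofReal (|g v|) ^ q := by
          refine lintegral_congr fun v => ?_
          exact lintegral_mul_const' _ _ (ENNReal.rpow_ne_top_of_nonneg hq0.le
            ENNReal.ofReal_ne_top)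
      _ ≤ ∫⁻ v in Set.Ioi (0:ℝ),
            (8 * ENNReal.ofReal (K0 (β * v))) * ENNReal.ofReal (|g v|) ^ q := by
          refine lintegral_mono_ae ?_
          filter_upwards [ae_restrict_mem measurableSet_Ioi] with v hv
          exact mul_le_mul_left (lintegral_u_phiKer_le x v β hv hβ hβ1) _
      _ = 8 * ∫⁻ v in Set.Ioi (0:ℝ),
            ENNReal.ofReal (|g v| ^ q * K0 (β * v)) := by
          rw [← lintegral_const_mul' (8 : ℝ≥0∞) _ (by norm_num)]
          refine lintegral_congr fun v => ?_
          rw [ENNReal.ofReal_mul (by positivity),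
            ENNReal.ofReal_rpow_of_nonneg (abs_nonneg _) hq0.le, mul_assoc,
            mul_comm (ENNReal.ofReal (K0 (β * v)))]
      _ = 8 * ENNReal.ofReal RG := by
          rw [← ofReal_integral_eq_lintegral_ofReal hgint
            (Filter.Eventually.of_forall fun v => by
              have := K0_nonneg (β * v); positivity)]
  -- combine
  have hC1 : (∫⁻ z, F z ^ p ∂ν) ^ (1/p) ≤ ENNReal.ofReal ((4 * RF) ^ (1/p)) := by
    calc (∫⁻ z, F z ^ p ∂ν) ^ (1/p) ≤ (4 * ENNReal.ofReal RF) ^ (1/p) :=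
          ENNReal.rpow_le_rpow hFside (by positivity)
      _ = ENNReal.ofReal ((4 * RF) ^ (1/p)) := by
          rw [show (4 : ℝ≥0∞) * ENNReal.ofReal RF = ENNReal.ofReal (4 * RF) by
            rw [ENNReal.ofReal_mul (by norm_num)]; norm_num]
          rw [ENNReal.ofReal_rpow_of_nonneg (by linarith) (by positivity)]
  have hC2 : (∫⁻ z, G z ^ q ∂ν) ^ (1/q) ≤ ENNReal.ofReal ((8 * RG) ^ (1/q)) := by
    calc (∫⁻ z, G z ^ q ∂ν) ^ (1/q) ≤ (8 * ENNReal.ofReal RG) ^ (1/q) :=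
          ENNReal.rpow_le_rpow hGside (by positivity)
      _ = ENNReal.ofReal ((8 * RG) ^ (1/q)) := by
          rw [show (8 : ℝ≥0∞) * ENNReal.ofReal RG = ENNReal.ofReal (8 * RG) by
            rw [ENNReal.ofReal_mul (by norm_num)]; norm_num]
          rw [ENNReal.ofReal_rpow_of_nonneg (by linarith) (by positivity)]
  have hA_le : A ≤ ENNReal.ofReal ((4 * RF) ^ (1/p) * (8 * RG) ^ (1/q)) := by
    rw [hAν]
    refine le_trans holder (le_trans (mul_le_mul' hC1 hC2) ?_)
    rw [← ENNReal.ofReal_mul (by positivity)]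
  have habs : |gconv f g x| ≤ 1/4 * ((4 * RF) ^ (1/p) * (8 * RG) ^ (1/q)) := by
    have h1 : ENNReal.ofReal |gconv f g x|
        ≤ ENNReal.ofReal (1/4 * ((4 * RF) ^ (1/p) * (8 * RG) ^ (1/q))) := by
      refine le_trans step1 ?_
      rw [ENNReal.ofReal_mul (by norm_num : (0:ℝ) ≤ 1/4)]
      exact mul_le_mul_right hA_le _
    exact (ENNReal.ofReal_le_ofReal_iff (by positivity)).1 h1
  -- real arithmetic
  have h24 : (2:ℝ) ^ (2:ℝ) = 4 := by
    rw [show (2:ℝ) = ((2:ℕ):ℝ) by norm_num, Real.rpow_natCast]; norm_num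
  have h28 : (2:ℝ) ^ (3:ℝ) = 8 := by
    rw [show (3:ℝ) = ((3:ℕ):ℝ) by norm_num, Real.rpow_natCast]; norm_num
  have hc4 : (4:ℝ) ^ (1/p) = 2 ^ (2/p) := by
    rw [← h24, ← Real.rpow_mul (by norm_num : (0:ℝ) ≤ 2)]
    norm_num [div_eq_mul_inv]
  have hc8 : (8:ℝ) ^ (1/q) = 2 ^ (3/q) := by
    rw [← h28, ← Real.rpow_mul (by norm_num : (0:ℝ) ≤ 2)]
    norm_num [div_eq_mul_inv]
  have hexp : 2/p + 3/q = 2 + 1/q := by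
    have h : 2/p + 3/q = 2*(1/p + 1/q) + 1/q := by ring
    rw [h, hpq]; ring
  have hconst : (1/4:ℝ) * ((4:ℝ) ^ (1/p) * (8:ℝ) ^ (1/q)) = 2 ^ (1/q) := by
    rw [hc4, hc8, ← Real.rpow_add (by norm_num : (0:ℝ) < 2), hexp,
      Real.rpow_add (by norm_num : (0:ℝ) < 2), h24]
    ring
  calc |gconv f g x| ≤ 1/4 * ((4 * RF) ^ (1/p) * (8 * RG) ^ (1/q)) := habs
    _ = 2 ^ (1/q) * RF ^ (1/p) * RG ^ (1/q) := by
        rw [Real.mul_rpow (by norm_num) hRFnn, Real.mul_rpow (by norm_num) hRGnn]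
        have h : (1/4:ℝ) * ((4:ℝ)^(1/p) * RF^(1/p) * ((8:ℝ)^(1/q) * RG^(1/q)))
            = (1/4 * ((4:ℝ)^(1/p) * (8:ℝ)^(1/q))) * (RF^(1/p) * RG^(1/q)) := by ring
        rw [h, hconst]; ring

end GconvHelpers

theorem gconv_two_parametric_bound (p q β s γ₁ γ₂ : ℝ) (hp : 1 < p) (hq : 1 < q)
    (hpq : 1 / p + 1 / q = 1) (hβ : β ∈ Set.Ioc (0 : ℝ) 1)
    (hs : 1 ≤ s) (hγ₁ : -1 < γ₁) (hγ₂ : 0 < γ₂)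
    (f g : ℝ → ℝ)
    (hf : MeasureTheory.MemLp f (ENNReal.ofReal p)
      (MeasureTheory.volume.restrict (Set.Ioi 0)))
    (hg : Measurable g)
    (hgK : MeasureTheory.IntegrableOn (fun v => |g v| ^ q * K0 (β * v)) (Set.Ioi 0)) :
    (∫ x in Set.Ioi (0 : ℝ), |gconv f g x| ^ s * x ^ γ₁ * Real.exp (-γ₂ * x)) ^ (1 / s) ≤
      2 ^ (1 / q) * γ₂ ^ (-(γ₁ + 1) / s) * Real.Gamma (γ₁ + 1) ^ (1 / s) *
        (∫ x in Set.Ioi (0 : ℝ), |f x| ^ p) ^ (1 / p) *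
        (∫ v in Set.Ioi (0 : ℝ), |g v| ^ q * K0 (β * v)) ^ (1 / q) := by
  have hs0 : 0 < s := lt_of_lt_of_le one_pos hs
  set RF : ℝ := ∫ x in Set.Ioi (0:ℝ), |f x| ^ p with hRF
  set RG : ℝ := ∫ v in Set.Ioi (0:ℝ), |g v| ^ q * K0 (β * v) with hRG
  have hRFnn : 0 ≤ RF := integral_nonneg fun u => by positivity
  have hRGnn : 0 ≤ RG := by
    refine integral_nonneg fun v => ?_
    have : 0 ≤ K0 (β * v) := integral_nonneg fun t => (Real.exp_pos _).le
    positivity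
  set M : ℝ := 2 ^ (1/q) * RF ^ (1/p) * RG ^ (1/q) with hM
  have hMnn : 0 ≤ M := by
    have := Real.rpow_nonneg hRFnn (1/p)
    have := Real.rpow_nonneg hRGnn (1/q)
    have : (0:ℝ) ≤ 2 ^ (1/q) := Real.rpow_nonneg (by norm_num) _
    positivity
  have hpt : ∀ x : ℝ, |gconv f g x| ≤ M :=
    gconv_pointwise p q β hp hq hpq hβ.1 hβ.2 f g hf hg hgK
  -- nonnegativity of the integrand a.e. on Ioi 0
  have h_nn : ∀ᵐ x ∂(volume.restrict (Set.Ioi (0:ℝ))),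
      0 ≤ |gconv f g x| ^ s * x ^ γ₁ * Real.exp (-γ₂ * x) := by
    filter_upwards [ae_restrict_mem measurableSet_Ioi] with x hx
    have h1 : (0:ℝ) ≤ |gconv f g x| ^ s := Real.rpow_nonneg (abs_nonneg _) s
    have h2 : (0:ℝ) ≤ x ^ γ₁ := Real.rpow_nonneg (le_of_lt hx) γ₁
    positivity
  -- bound function integrable
  have hbound_int : IntegrableOn (fun x : ℝ => M ^ s * (x ^ γ₁ * Real.exp (-γ₂ * x)))
      (Set.Ioi 0) := by
    have h := (integrableOn_rpow_mul_exp_neg_mul_rpow (p := 1) hγ₁ one_pos hγ₂)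
    simp only [Real.rpow_one] at h
    exact h.const_mul _
  have hmono : (∫ x in Set.Ioi (0:ℝ), |gconv f g x| ^ s * x ^ γ₁ * Real.exp (-γ₂ * x))
      ≤ ∫ x in Set.Ioi (0:ℝ), M ^ s * (x ^ γ₁ * Real.exp (-γ₂ * x)) := by
    refine integral_mono_of_nonneg h_nn hbound_int ?_
    filter_upwards [ae_restrict_mem measurableSet_Ioi] with x hx
    have h1 : |gconv f g x| ^ s ≤ M ^ s :=
      Real.rpow_le_rpow (abs_nonneg _) (hpt x) hs0.le
    have h2 : (0:ℝ) ≤ x ^ γ₁ := Real.rpow_nonneg (le_of_lt hx) γ₁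
    have h3 : (0:ℝ) < Real.exp (-γ₂ * x) := Real.exp_pos _
    calc |gconv f g x| ^ s * x ^ γ₁ * Real.exp (-γ₂ * x)
        = |gconv f g x| ^ s * (x ^ γ₁ * Real.exp (-γ₂ * x)) := by ring
      _ ≤ M ^ s * (x ^ γ₁ * Real.exp (-γ₂ * x)) :=
          mul_le_mul_of_nonneg_right h1 (by positivity)
  have hval : (∫ x in Set.Ioi (0:ℝ), M ^ s * (x ^ γ₁ * Real.exp (-γ₂ * x)))
      = M ^ s * ((1/γ₂) ^ (γ₁ + 1) * Real.Gamma (γ₁ + 1)) := by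
    rw [integral_const_mul]
    congr 1
    have h := integral_rpow_mul_exp_neg_mul_Ioi (a := γ₁ + 1) (r := γ₂) (by linarith) hγ₂
    simpa [add_sub_cancel_right, neg_mul] using h
  have hInn : (0:ℝ) ≤ ∫ x in Set.Ioi (0:ℝ), |gconv f g x| ^ s * x ^ γ₁ * Real.exp (-γ₂ * x) :=
    integral_nonneg_of_ae h_nn
  have hGnn : (0:ℝ) ≤ Real.Gamma (γ₁ + 1) := (Real.Gamma_pos_of_pos (by linarith)).le
  have hstep : (∫ x in Set.Ioi (0:ℝ), |gconv f g x| ^ s * x ^ γ₁ * Real.exp (-γ₂ * x)) ^ (1/s)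
      ≤ (M ^ s * ((1/γ₂) ^ (γ₁ + 1) * Real.Gamma (γ₁ + 1))) ^ (1/s) := by
    refine Real.rpow_le_rpow hInn (le_trans hmono (le_of_eq hval)) (by positivity)
  refine le_trans hstep (le_of_eq ?_)
  have hc1 : (0:ℝ) ≤ M ^ s := Real.rpow_nonneg hMnn s
  have hc2 : (0:ℝ) ≤ (1/γ₂) ^ (γ₁ + 1) := Real.rpow_nonneg (by positivity) _
  rw [Real.mul_rpow hc1 (by positivity), Real.mul_rpow hc2 hGnn]
  have hMs : (M ^ s) ^ (1/s) = M := by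
    rw [← Real.rpow_mul hMnn, mul_one_div_cancel (ne_of_gt hs0), Real.rpow_one]
  have hγ : ((1/γ₂) ^ (γ₁ + 1)) ^ (1/s) = γ₂ ^ (-(γ₁ + 1) / s) := by
    rw [one_div, ← Real.rpow_neg_one γ₂, ← Real.rpow_mul hγ₂.le,
      ← Real.rpow_mul hγ₂.le]
    congr 1
    field_simp
  rw [hMs, hγ, hM]
  ring
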